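/- arXiv:2112.13233 — 3 statements merged into one kernel-verified Lean document; each statement's English description precedes it below -/
import Mathlib

section
/- Let (X,f) be a topological dynamical system and A a minimal quasi-section. Then the closures of O(A), O⁺(A), and O⁻(A) are all equal to M_f. -/
open Set

/-- The full orbit `{fⁿ(x) : n ∈ ℤ}` of a point under a homeomorphism. -/
def orbitZ {X : Type*} [TopologicalSpace X] (f : X ≃ₜ X) (x : X) : Set X :=
  {y | ∃ n : ℤ, (f.toEquiv ^ n) x = y}

/-- `O(A) = ⋃_{n ∈ ℤ} fⁿ(A)`. -/
def orbitSetZ {X : Type*} [TopologicalSpace X] (f : X ≃ₜ X) (A : Set X) : Set X :=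
  ⋃ n : ℤ, (f.toEquiv ^ n) '' A

/-- `O⁺(A) = ⋃_{n ≥ 0} fⁿ(A)`. -/
def orbitSetP {X : Type*} [TopologicalSpace X] (f : X ≃ₜ X) (A : Set X) : Set X :=
  ⋃ n : ℕ, (f.toEquiv ^ (n : ℤ)) '' A

/-- `O⁻(A) = ⋃_{n ≤ 0} fⁿ(A)`. -/
def orbitSetN {X : Type*} [TopologicalSpace X] (f : X ≃ₜ X) (A : Set X) : Set X :=
  ⋃ n : ℕ, (f.toEquiv ^ (-(n : ℤ))) '' A

/-- The ω-limit set of a point. -/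
def omegaSet {X : Type*} [TopologicalSpace X] (f : X ≃ₜ X) (x : X) : Set X :=
  ⋂ n : ℕ, closure {y | ∃ m : ℕ, n ≤ m ∧ (f.toEquiv ^ (m : ℤ)) x = y}

/-- The α-limit set of a point. -/
def alphaSet {X : Type*} [TopologicalSpace X] (f : X ≃ₜ X) (x : X) : Set X :=
  ⋂ n : ℕ, closure {y | ∃ m : ℕ, n ≤ m ∧ (f.toEquiv ^ (-(m : ℤ))) x = y}

/-- A minimal set: nonempty, closed, invariant, and every orbit in it is dense in it. -/
def IsMinimalSet {X : Type*} [TopologicalSpace X] (f : X ≃ₜ X) (M : Set X) : Prop :=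
  M.Nonempty ∧ IsClosed M ∧ f '' M = M ∧ ∀ x ∈ M, M ⊆ closure (orbitZ f x)

/-- `M_f`: the closure of the union of all minimal sets. -/
def minimalUnion {X : Type*} [TopologicalSpace X] (f : X ≃ₜ X) : Set X :=
  closure (⋃₀ {M | IsMinimalSet f M})

/-- A wandering point. -/
def IsWandering {X : Type*} [TopologicalSpace X] (f : X ≃ₜ X) (x : X) : Prop :=
  ∃ U : Set X, IsOpen U ∧ x ∈ U ∧ ∀ n : ℤ, n ≠ 0 → (f.toEquiv ^ n) '' U ∩ U = ∅

/-- `Ω_f`: the set of non-wandering points. -/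
def nonWandering {X : Type*} [TopologicalSpace X] (f : X ≃ₜ X) : Set X :=
  {x | ¬ IsWandering f x}

/-- A quasi-section: a closed set every open neighborhood of which has full orbit. -/
def IsQuasiSection {X : Type*} [TopologicalSpace X] (f : X ≃ₜ X) (A : Set X) : Prop :=
  IsClosed A ∧ ∀ U : Set X, IsOpen U → A ⊆ U → orbitSetZ f U = Set.univ

/-- A minimal quasi-section (minimal w.r.t. inclusion among quasi-sections). -/
def IsMinimalQuasiSection {X : Type*} [TopologicalSpace X] (f : X ≃ₜ X) (A : Set X) : Prop :=
  IsQuasiSection f A ∧ ∀ B : Set X, IsQuasiSection f B → B ⊆ A → B = A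

/-- A basic set: a quasi-section meeting every orbit in at most one point. -/
def IsBasicSet {X : Type*} [TopologicalSpace X] (f : X ≃ₜ X) (A : Set X) : Prop :=
  IsQuasiSection f A ∧ ∀ x : X, (orbitZ f x ∩ A).Subsingleton

/-- A minimal basic set (minimal w.r.t. inclusion among basic sets). -/
def IsMinimalBasicSet {X : Type*} [TopologicalSpace X] (f : X ≃ₜ X) (A : Set X) : Prop :=
  IsBasicSet f A ∧ ∀ B : Set X, IsBasicSet f B → B ⊆ A → B = A

/-- Densely aperiodic: the points with infinite orbit are dense. -/
def DenselyAperiodic {X : Type*} [TopologicalSpace X] (f : X ≃ₜ X) : Prop :=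
  Dense {x : X | (orbitZ f x).Infinite}

section Helpers

variable {X : Type*} [TopologicalSpace X]

lemma permPow_cont (g : X ≃ X) (hg : Continuous g) : ∀ n : ℕ, Continuous ⇑(g ^ n) := by
  intro n
  induction n with
  | zero => simpa using continuous_id
  | succ n ih => rw [pow_succ, Equiv.Perm.coe_mul]; exact ih.comp hg

lemma contZ (f : X ≃ₜ X) (n : ℤ) : Continuous ⇑(f.toEquiv ^ n) := by
  cases n with
  | ofNat n => rw [Int.ofNat_eq_coe, zpow_natCast]; exact permPow_cont f.toEquiv f.continuous n
  | negSucc n =>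
      rw [zpow_negSucc, ← inv_pow]
      exact permPow_cont f.toEquiv⁻¹ f.symm.continuous (n + 1)

/-- `f^n` as a homeomorphism. -/
def powH (f : X ≃ₜ X) (n : ℤ) : X ≃ₜ X where
  toEquiv := f.toEquiv ^ n
  continuous_toFun := contZ f n
  continuous_invFun := by
    have := contZ f (-n)
    rwa [zpow_neg] at this

lemma powH_coe (f : X ≃ₜ X) (n : ℤ) : ⇑(powH f n) = ⇑(f.toEquiv ^ n) := rfl

lemma image_closure_z (f : X ≃ₜ X) (n : ℤ) (S : Set X) :
    (f.toEquiv ^ n) '' closure S = closure ((f.toEquiv ^ n) '' S) :=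
  (powH f n).image_closure S

lemma img_iff_pre (g : X ≃ X) (S : Set X) : g '' S = S ↔ g ⁻¹' S = S := by
  constructor
  · intro h
    conv_lhs => rw [← h]
    simp
  · intro h
    conv_lhs => rw [← h]
    simp

lemma invN (g : X ≃ X) (S : Set X) (h : g '' S = S) : ∀ n : ℕ, (g ^ n) '' S = S := by
  intro n
  induction n with
  | zero => simp
  | succ n ih => rw [pow_succ, Equiv.Perm.coe_mul, image_comp, h]; exact ih

lemma invZ (f : X ≃ₜ X) (S : Set X) (h : f.toEquiv '' S = S) :
    ∀ n : ℤ, (f.toEquiv ^ n) '' S = S := by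
  have hinv : f.toEquiv.symm '' S = S := by
    have h2 : f.toEquiv.symm '' (f.toEquiv '' S) = S := Equiv.symm_image_image _ _
    rw [h] at h2; exact h2
  intro n
  cases n with
  | ofNat n => rw [Int.ofNat_eq_coe, zpow_natCast]; exact invN _ _ h n
  | negSucc n =>
      rw [zpow_negSucc, ← inv_pow]
      exact invN _ _ (by rw [Equiv.Perm.inv_def]; exact hinv) (n+1)

end Helpers


section Dyn

variable {X : Type*} [TopologicalSpace X]

lemma toEquiv_preimage_closure (f : X ≃ₜ X) (S : Set X) :
    f.toEquiv ⁻¹' closure S = closure (f.toEquiv ⁻¹' S) := f.preimage_closure S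

lemma toEquiv_image_closure (f : X ≃ₜ X) (S : Set X) :
    f.toEquiv '' closure S = closure (f.toEquiv '' S) := f.image_closure S

lemma zpow_apply_add (f : X ≃ₜ X) (m n : ℤ) (x : X) :
    (f.toEquiv ^ (m + n)) x = (f.toEquiv ^ m) ((f.toEquiv ^ n) x) := by
  rw [zpow_add]; rfl

lemma self_mem_orbitZ (f : X ≃ₜ X) (x : X) : x ∈ orbitZ f x := ⟨0, by simp⟩

lemma orbitZ_inv (f : X ≃ₜ X) (x : X) : f.toEquiv '' orbitZ f x = orbitZ f x := by
  apply Set.Subset.antisymm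
  · rintro y ⟨z, ⟨n, rfl⟩, rfl⟩
    refine ⟨1 + n, ?_⟩
    rw [zpow_apply_add f 1 n]; simp
  · rintro y ⟨n, rfl⟩
    refine ⟨(f.toEquiv ^ (n - 1)) x, ⟨n - 1, rfl⟩, ?_⟩
    have := zpow_apply_add f 1 (n - 1) x
    simp only [zpow_one] at this ⊢
    rw [← this]
    norm_num

lemma orbitZ_subset (f : X ≃ₜ X) (S : Set X) (h : f.toEquiv '' S = S) {x : X} (hx : x ∈ S) :
    orbitZ f x ⊆ S := by
  rintro y ⟨n, rfl⟩
  rw [← invZ f S h n]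
  exact ⟨x, hx, rfl⟩

/-- Existence of a minimal set inside a nonempty closed invariant set. -/
lemma exists_minimal_set [CompactSpace X] [T2Space X] (f : X ≃ₜ X) (K : Set X)
    (hne : K.Nonempty) (hcl : IsClosed K) (hinv : f.toEquiv '' K = K) :
    ∃ M, M ⊆ K ∧ IsMinimalSet f M := by
  set S : Set (Set X) := {C | C.Nonempty ∧ IsClosed C ∧ f.toEquiv ⁻¹' C = C ∧ C ⊆ K} with hS
  have hKS : K ∈ S := ⟨hne, hcl, (img_iff_pre _ _).1 hinv, Set.Subset.rfl⟩
  have Hz : ∀ c ⊆ S, IsChain (· ⊆ ·) c → c.Nonempty → ∃ lb ∈ S, ∀ s ∈ c, lb ⊆ s := by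
      intro c hcS hchain hcne
      refine ⟨⋂₀ c, ⟨?_, ?_, ?_, ?_⟩, fun s hs => Set.sInter_subset_of_mem hs⟩
      · have : Nonempty c := hcne.to_subtype
        apply IsCompact.nonempty_sInter_of_directed_nonempty_isCompact_isClosed
        · exact IsChain.directedOn hchain.symm
        · exact fun U hU => (hcS hU).1
        · exact fun U hU => (hcS hU).2.1.isCompact
        · exact fun U hU => (hcS hU).2.1
      · exact isClosed_sInter fun U hU => (hcS hU).2.1
      · rw [Set.preimage_sInter]
        ext x
        simp only [Set.mem_iInter, Set.mem_sInter, Set.mem_preimage]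
        constructor
        · intro h U hU
          have := h U hU
          rwa [← (hcS hU).2.2.1]
        · intro h U hU
          have := h U hU
          rw [← (hcS hU).2.2.1] at this
          exact this
      · obtain ⟨s, hs⟩ := hcne
        exact (Set.sInter_subset_of_mem hs).trans (hcS hs).2.2.2
  obtain ⟨M, hMK, hMmin'⟩ := zorn_superset_nonempty S Hz K hKS
  have hMmin : ∀ C ∈ S, C ⊆ M → C = M :=
    fun C hC hCM => Set.Subset.antisymm hCM (hMmin'.2 hC hCM)
  obtain ⟨hMne, hMcl, hMpre, _⟩ := hMmin'.prop
  have hMimg : f.toEquiv '' M = M := (img_iff_pre _ _).2 hMpre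
  refine ⟨M, hMK, hMne, hMcl, hMimg, ?_⟩
  intro x hx
  have horb : orbitZ f x ⊆ M := orbitZ_subset f M hMimg hx
  have hC : closure (orbitZ f x) ∈ S := by
    refine ⟨⟨x, subset_closure (self_mem_orbitZ f x)⟩, isClosed_closure, ?_,
      (closure_minimal horb hMcl).trans hMK⟩
    rw [toEquiv_preimage_closure, (img_iff_pre _ _).1 (orbitZ_inv f x)]
  rw [hMmin _ hC (closure_minimal horb hMcl)]

lemma quasi_meets_minimal [Nonempty X] (f : X ≃ₜ X) {A M : Set X}
    (hA : IsQuasiSection f A) (hM : IsMinimalSet f M) : (A ∩ M).Nonempty := by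
  by_contra hcon
  rw [Set.not_nonempty_iff_eq_empty] at hcon
  have hAsub : A ⊆ Mᶜ := fun a ha => fun haM =>
    (Set.eq_empty_iff_forall_notMem.1 hcon a) ⟨ha, haM⟩
  have h1 := hA.2 Mᶜ hM.2.1.isOpen_compl hAsub
  have h2 : orbitSetZ f Mᶜ = Mᶜ := by
    unfold orbitSetZ
    have : ∀ n : ℤ, (f.toEquiv ^ n) '' Mᶜ = Mᶜ := by
      intro n
      rw [Set.image_compl_eq (f.toEquiv ^ n).bijective, invZ f M hM.2.2.1 n]
    simp only [this, Set.iUnion_const]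
  rw [h2] at h1
  obtain ⟨x, hx⟩ := hM.1
  exact (h1 ▸ Set.mem_univ x : (x : X) ∈ Mᶜ) hx

end Dyn

section Omega

variable {X : Type*} [TopologicalSpace X]

/-- Tail sets of the forward orbit. -/
def Tset (f : X ≃ₜ X) (a : X) (n : ℕ) : Set X :=
  {y | ∃ m : ℕ, n ≤ m ∧ (f.toEquiv ^ (m : ℤ)) a = y}

lemma omegaSet_eq (f : X ≃ₜ X) (a : X) : omegaSet f a = ⋂ n : ℕ, closure (Tset f a n) := rfl

lemma Tset_antitone (f : X ≃ₜ X) (a : X) {n n' : ℕ} (h : n ≤ n') :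
    Tset f a n' ⊆ Tset f a n := by
  rintro y ⟨m, hm, rfl⟩
  exact ⟨m, h.trans hm, rfl⟩

lemma Tset_pre (f : X ≃ₜ X) (a : X) (n : ℕ) :
    f.toEquiv ⁻¹' Tset f a (n + 1) ⊆ Tset f a n := by
  rintro z ⟨m, hm, hz⟩
  refine ⟨m - 1, by omega, ?_⟩
  have h1 : (f.toEquiv ^ (-1 + (m : ℤ))) a = (f.toEquiv ^ (-1 : ℤ)) ((f.toEquiv ^ (m : ℤ)) a) :=
    zpow_apply_add f (-1) m a
  rw [hz] at h1
  have h2 : ((m - 1 : ℕ) : ℤ) = -1 + (m : ℤ) := by omega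
  rw [h2, h1]
  show f.toEquiv.symm (f.toEquiv z) = z
  simp

lemma Tset_sub_pre (f : X ≃ₜ X) (a : X) (n : ℕ) :
    Tset f a n ⊆ f.toEquiv ⁻¹' Tset f a n := by
  rintro y ⟨m, hm, rfl⟩
  refine ⟨m + 1, by omega, ?_⟩
  have h1 : (f.toEquiv ^ (1 + (m : ℤ))) a = (f.toEquiv ^ (1 : ℤ)) ((f.toEquiv ^ (m : ℤ)) a) :=
    zpow_apply_add f 1 m a
  have h2 : ((m + 1 : ℕ) : ℤ) = 1 + (m : ℤ) := by omega
  rw [h2, h1]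
  simp

lemma omegaSet_isClosed (f : X ≃ₜ X) (a : X) : IsClosed (omegaSet f a) :=
  isClosed_iInter fun _ => isClosed_closure

lemma omegaSet_nonempty [CompactSpace X] (f : X ≃ₜ X) (a : X) : (omegaSet f a).Nonempty := by
  rw [omegaSet_eq]
  apply IsCompact.nonempty_iInter_of_directed_nonempty_isCompact_isClosed
  · intro i j
    exact ⟨max i j, closure_mono (Tset_antitone f a (le_max_left i j)),
      closure_mono (Tset_antitone f a (le_max_right i j))⟩
  · exact fun n => ⟨(f.toEquiv ^ (n : ℤ)) a, subset_closure ⟨n, le_refl n, rfl⟩⟩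
  · exact fun n => isClosed_closure.isCompact
  · exact fun n => isClosed_closure

lemma omegaSet_subset (f : X ≃ₜ X) (a : X) (S : Set X) (hcl : IsClosed S)
    (hinv : f.toEquiv '' S = S) (ha : a ∈ S) : omegaSet f a ⊆ S := by
  intro y hy
  have h0 := Set.mem_iInter.1 hy 0
  have hT : Tset f a 0 ⊆ S := by
    rintro z ⟨m, _, rfl⟩
    rw [← invZ f S hinv (m : ℤ)]
    exact ⟨a, ha, rfl⟩
  exact closure_minimal hT hcl h0

lemma omegaSet_inv (f : X ≃ₜ X) (a : X) : f.toEquiv '' omegaSet f a = omegaSet f a := by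
  rw [img_iff_pre]
  rw [omegaSet_eq, Set.preimage_iInter]
  apply Set.Subset.antisymm
  · intro y hy
    apply Set.mem_iInter.2
    intro n
    have h1 := Set.mem_iInter.1 hy (n + 1)
    rw [toEquiv_preimage_closure] at h1
    exact closure_mono (Tset_pre f a n) h1
  · intro y hy
    apply Set.mem_iInter.2
    intro n
    rw [toEquiv_preimage_closure]
    exact closure_mono (Tset_sub_pre f a n) (Set.mem_iInter.1 hy n)

lemma minimal_subset_closure_T0 [CompactSpace X] (f : X ≃ₜ X) {M : Set X}
    (hM : IsMinimalSet f M) {a : X} (ha : a ∈ M) : M ⊆ closure (Tset f a 0) := by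
  obtain ⟨z, hz⟩ := omegaSet_nonempty f a
  have himg : f.toEquiv '' M = M := hM.2.2.1
  have hzM : z ∈ M := omegaSet_subset f a M hM.2.1 himg ha hz
  have h1 : M ⊆ closure (orbitZ f z) := hM.2.2.2 z hzM
  have h2 : closure (orbitZ f z) ⊆ omegaSet f a :=
    closure_minimal (orbitZ_subset f _ (omegaSet_inv f a) hz) (omegaSet_isClosed f a)
  exact h1.trans (h2.trans (Set.iInter_subset _ 0))

lemma Tset0_subset_orbitSetP (f : X ≃ₜ X) {A : Set X} {a : X} (ha : a ∈ A) :
    Tset f a 0 ⊆ orbitSetP f A := by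
  rintro y ⟨m, _, rfl⟩
  exact Set.mem_iUnion.2 ⟨m, ⟨a, ha, rfl⟩⟩

end Omega

section Symm

variable {X : Type*} [TopologicalSpace X]

lemma symm_toEquiv_zpow (f : X ≃ₜ X) (n : ℤ) : f.symm.toEquiv ^ n = f.toEquiv ^ (-n) := by
  have h : f.symm.toEquiv = f.toEquiv⁻¹ := rfl
  rw [h, inv_zpow']

lemma orbitZ_symm (f : X ≃ₜ X) (x : X) : orbitZ f.symm x = orbitZ f x := by
  ext y
  constructor
  · rintro ⟨n, rfl⟩
    exact ⟨-n, by rw [← symm_toEquiv_zpow]⟩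
  · rintro ⟨n, rfl⟩
    exact ⟨-n, by rw [symm_toEquiv_zpow, neg_neg]⟩

lemma isMinimalSet_symm (f : X ≃ₜ X) {M : Set X} (h : IsMinimalSet f M) :
    IsMinimalSet f.symm M := by
  refine ⟨h.1, h.2.1, ?_, ?_⟩
  · have h2 : f.symm '' (f '' M) = M := Equiv.symm_image_image f.toEquiv M
    rw [h.2.2.1] at h2
    exact h2
  · intro x hx
    rw [orbitZ_symm]
    exact h.2.2.2 x hx

lemma orbitSetP_symm (f : X ≃ₜ X) (A : Set X) : orbitSetP f.symm A = orbitSetN f A := by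
  unfold orbitSetP orbitSetN
  simp only [symm_toEquiv_zpow]

end Symm

section Main

variable {X : Type*} [TopologicalSpace X]

lemma minimalUnion_inv (f : X ≃ₜ X) : f.toEquiv '' minimalUnion f = minimalUnion f := by
  unfold minimalUnion
  have hU : f.toEquiv '' ⋃₀ {M | IsMinimalSet f M} = ⋃₀ {M | IsMinimalSet f M} := by
    apply Set.Subset.antisymm
    · rintro y ⟨z, ⟨M, hM, hzM⟩, rfl⟩
      have himg : f.toEquiv '' M = M := hM.2.2.1
      have : f.toEquiv z ∈ f.toEquiv '' M := ⟨z, hzM, rfl⟩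
      rw [himg] at this
      exact ⟨M, hM, this⟩
    · rintro y ⟨M, hM, hyM⟩
      have himg : f.toEquiv '' M = M := hM.2.2.1
      rw [← himg] at hyM
      obtain ⟨z, hz, rfl⟩ := hyM
      exact ⟨z, ⟨M, hM, hz⟩, rfl⟩
  rw [toEquiv_image_closure, hU]

theorem stmt5' {X : Type*} [TopologicalSpace X] [CompactSpace X] [T2Space X] [Nonempty X]
    (f : X ≃ₜ X) (A : Set X) (hA : IsMinimalQuasiSection f A) :
    closure (orbitSetZ f A) = minimalUnion f ∧
    closure (orbitSetP f A) = minimalUnion f ∧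
    closure (orbitSetN f A) = minimalUnion f := by
  have hAq := hA.1
  have hMUcl : IsClosed (minimalUnion f) := isClosed_closure
  have invMU := minimalUnion_inv f
  -- minimalUnion is inside the closures of forward/backward orbits
  have hsubP : minimalUnion f ⊆ closure (orbitSetP f A) := by
    apply closure_minimal _ isClosed_closure
    apply Set.sUnion_subset
    intro M hM
    obtain ⟨a, haA, haM⟩ := quasi_meets_minimal f hAq hM
    exact (minimal_subset_closure_T0 f hM haM).trans
      (closure_mono (Tset0_subset_orbitSetP f haA))
  have hsubN : minimalUnion f ⊆ closure (orbitSetN f A) := by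
    apply closure_minimal _ isClosed_closure
    apply Set.sUnion_subset
    intro M hM
    obtain ⟨a, haA, haM⟩ := quasi_meets_minimal f hAq hM
    have h1 := (minimal_subset_closure_T0 f.symm (isMinimalSet_symm f hM) haM).trans
      (closure_mono (Tset0_subset_orbitSetP f.symm haA))
    rwa [orbitSetP_symm] at h1
  -- A is inside minimalUnion
  have hAMU : A ⊆ minimalUnion f := by
    intro x hx
    by_contra hxM
    have hnb : (minimalUnion f)ᶜ ∈ nhds x := hMUcl.isOpen_compl.mem_nhds hxM
    obtain ⟨t, htn, htc, hts⟩ := exists_mem_nhds_isClosed_subset hnb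
    have hxV : x ∈ interior t := mem_interior_iff_mem_nhds.2 htn
    have hVcl : closure (interior t) ⊆ (minimalUnion f)ᶜ :=
      (closure_minimal interior_subset htc).trans hts
    have hBq : IsQuasiSection f (A \ interior t) := by
      constructor
      · exact hAq.1.sdiff isOpen_interior
      · intro U hU hBU
        rw [Set.eq_univ_iff_forall]
        intro y
        by_contra hy
        have hdisj : orbitZ f y ⊆ Uᶜ := by
          intro z hz hzU
          obtain ⟨n, rfl⟩ := hz
          apply hy
          refine Set.mem_iUnion.2 ⟨-n, ⟨(f.toEquiv ^ n) y, hzU, ?_⟩⟩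
          rw [← zpow_apply_add f (-n) n, neg_add_cancel]
          simp
        have hKinv : f.toEquiv '' closure (orbitZ f y) = closure (orbitZ f y) := by
          rw [toEquiv_image_closure, orbitZ_inv]
        obtain ⟨M, hMK, hMmin⟩ := exists_minimal_set f _
          ⟨y, subset_closure (self_mem_orbitZ f y)⟩ isClosed_closure hKinv
        obtain ⟨a, haA, haM⟩ := quasi_meets_minimal f hAq hMmin
        have haU : a ∉ U := closure_minimal hdisj hU.isClosed_compl (hMK haM)
        have haV : a ∈ interior t := by
          by_contra haV
          exact haU (hBU ⟨haA, haV⟩)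
        exact hVcl (subset_closure haV)
          (subset_closure (Set.mem_sUnion.2 ⟨M, hMmin, haM⟩))
    have hBA := hA.2 _ hBq Set.diff_subset
    have hxB : x ∈ A \ interior t := by rw [hBA]; exact hx
    exact hxB.2 hxV
  -- closure of the full orbit of A is inside minimalUnion
  have hZsub : closure (orbitSetZ f A) ⊆ minimalUnion f := by
    apply closure_minimal _ hMUcl
    apply Set.iUnion_subset
    intro n
    calc (f.toEquiv ^ n) '' A ⊆ (f.toEquiv ^ n) '' minimalUnion f := Set.image_mono hAMU
      _ = minimalUnion f := invZ f _ invMU n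
  have hPZ : orbitSetP f A ⊆ orbitSetZ f A :=
    Set.iUnion_subset fun n => Set.subset_iUnion (fun k : ℤ => (f.toEquiv ^ k) '' A) (n : ℤ)
  have hNZ : orbitSetN f A ⊆ orbitSetZ f A :=
    Set.iUnion_subset fun n => Set.subset_iUnion (fun k : ℤ => (f.toEquiv ^ k) '' A) (-(n : ℤ))
  refine ⟨Set.Subset.antisymm hZsub (hsubP.trans (closure_mono hPZ)), ?_, ?_⟩
  · exact Set.Subset.antisymm ((closure_mono hPZ).trans hZsub) hsubP
  · exact Set.Subset.antisymm ((closure_mono hNZ).trans hZsub) hsubN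

end Main

theorem stmt5 {X : Type*} [TopologicalSpace X] [CompactSpace X] [T2Space X] [Nonempty X] (f : X ≃ₜ X)
    (A : Set X) (hA : IsMinimalQuasiSection f A) :
    closure (orbitSetZ f A) = minimalUnion f ∧
    closure (orbitSetP f A) = minimalUnion f ∧
    closure (orbitSetN f A) = minimalUnion f :=
  stmt5' f A hA
end

section
/- Let (X,f) be a densely aperiodic topological dynamical system and B a basic set. Then int B ∩ M = ∅ for every minimal set M. -/
open Set

section Aux

variable {X : Type*} [TopologicalSpace X] (f : X ≃ₜ X)

lemma zpow_add_apply (k m : ℤ) (z : X) :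
    (f.toEquiv ^ (k + m)) z = (f.toEquiv ^ k) ((f.toEquiv ^ m) z) := by
  rw [zpow_add, Equiv.Perm.mul_apply]

/-- Each integer power of `f.toEquiv` is realized by a homeomorphism. -/
lemma exists_homeo_zpow (k : ℤ) : ∃ g : X ≃ₜ X, ∀ z : X, g z = (f.toEquiv ^ k) z := by
  induction k using Int.induction_on with
  | zero => exact ⟨Homeomorph.refl X, by simp⟩
  | succ i ih =>
    obtain ⟨g, hg⟩ := ih
    refine ⟨(f.trans g), fun z => ?_⟩
    rw [zpow_add_one, Equiv.Perm.mul_apply]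
    simpa using hg (f z)
  | pred i ih =>
    obtain ⟨g, hg⟩ := ih
    refine ⟨(f.symm.trans g), fun z => ?_⟩
    rw [zpow_sub_one, Equiv.Perm.mul_apply]
    have : (f.toEquiv)⁻¹ z = f.symm z := rfl
    simpa [this] using hg (f.symm z)

lemma mem_orbitZ_self (x : X) : x ∈ orbitZ f x := ⟨0, by simp⟩

lemma zpow_mem_orbitZ (x : X) (k : ℤ) : (f.toEquiv ^ k) x ∈ orbitZ f x := ⟨k, rfl⟩

lemma orbitZ_eq_of_mem {x z : X} (hz : z ∈ orbitZ f x) : orbitZ f z = orbitZ f x := by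
  obtain ⟨k, hk⟩ := hz
  ext y
  constructor
  · rintro ⟨m, hm⟩
    exact ⟨m + k, by rw [zpow_add_apply, hk]; exact hm⟩
  · rintro ⟨m, hm⟩
    refine ⟨m - k, ?_⟩
    rw [← hk, ← zpow_add_apply]
    simpa using hm

lemma fixed_zpow {x : X} {e : Equiv.Perm X} (hx : e x = x) (q : ℤ) : (e ^ q) x = x := by
  induction q using Int.induction_on with
  | zero => simp
  | succ i ih => rw [zpow_add_one, Equiv.Perm.mul_apply, hx, ih]
  | pred i ih =>
    rw [zpow_sub_one, Equiv.Perm.mul_apply]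
    have h2 : e⁻¹ x = x := by
      conv_lhs => rw [← hx]
      exact e.symm_apply_apply x
    rw [h2, ih]

/-- If some nonzero power fixes `x`, its orbit is finite. -/
lemma orbit_finite_of_periodic {x : X} {n : ℤ} (hn : n ≠ 0)
    (hx : (f.toEquiv ^ n) x = x) : (orbitZ f x).Finite := by
  have hnat : ((n.natAbs : ℤ) ≠ 0) := by exact_mod_cast Int.natAbs_ne_zero.mpr hn
  have hfixabs : (f.toEquiv ^ (n.natAbs : ℤ)) x = x := by
    rcases Int.natAbs_eq n with h | h
    · rw [← h]; exact hx
    · have : (n.natAbs : ℤ) = -n := by omega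
      rw [this, zpow_neg]
      conv_lhs => rw [← hx]
      exact (f.toEquiv ^ n).symm_apply_apply x
  have hmul : ∀ q : ℤ, (f.toEquiv ^ ((n.natAbs : ℤ) * q)) x = x := by
    intro q
    rw [zpow_mul]
    exact fixed_zpow (e := f.toEquiv ^ (n.natAbs : ℤ)) hfixabs q
  have hsub : orbitZ f x ⊆ (fun k : ℕ => (f.toEquiv ^ (k : ℤ)) x) '' (Set.Iio n.natAbs) := by
    rintro y ⟨m, rfl⟩
    have hpos : (0 : ℤ) < (n.natAbs : ℤ) := by
      have := Int.natAbs_pos.mpr hn; exact_mod_cast this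
    have hr0 : 0 ≤ m % (n.natAbs : ℤ) := Int.emod_nonneg m (by omega)
    have hrlt : m % (n.natAbs : ℤ) < (n.natAbs : ℤ) := Int.emod_lt_of_pos m hpos
    refine ⟨(m % (n.natAbs : ℤ)).toNat, by simpa using (by omega : (m % (n.natAbs : ℤ)).toNat < n.natAbs), ?_⟩
    have hsplit : ((m % (n.natAbs : ℤ)).toNat : ℤ) = m % (n.natAbs : ℤ) := Int.toNat_of_nonneg hr0
    dsimp only
    rw [hsplit]
    have : m = m % (n.natAbs : ℤ) + (n.natAbs : ℤ) * (m / (n.natAbs : ℤ)) :=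
      (Int.emod_add_mul_ediv m _).symm
    conv_rhs => rw [this]
    rw [zpow_add_apply, hmul]
  exact Set.Finite.subset ((Set.finite_Iio _).image _) hsub

lemma aperiodic_of_infinite {x : X} (hx : (orbitZ f x).Infinite) :
    ∀ n : ℤ, n ≠ 0 → (f.toEquiv ^ n) x ≠ x := by
  intro n hn hfix
  exact hx (orbit_finite_of_periodic f hn hfix)

lemma orbit_infinite_of_aperiodic {x : X} (h : ∀ n : ℤ, n ≠ 0 → (f.toEquiv ^ n) x ≠ x) :
    (orbitZ f x).Infinite := by
  refine Set.infinite_of_injective_forall_mem (f := fun k : ℤ => (f.toEquiv ^ k) x)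
    ?_ (fun k => ⟨k, rfl⟩)
  · intro a b hab
    by_contra hne
    apply h (a - b) (by omega)
    dsimp at hab
    have h2 := congrArg ⇑(f.toEquiv ^ (-b)) hab
    rw [← zpow_add_apply, ← zpow_add_apply, neg_add_cancel, zpow_zero] at h2
    rw [show a - b = -b + a from by omega]
    simpa using h2

lemma orbitZ_image_zpow (x : X) (k : ℤ) :
    ⇑(f.toEquiv ^ k) '' orbitZ f x = orbitZ f x := by
  ext y
  constructor
  · rintro ⟨w, ⟨m, rfl⟩, rfl⟩
    exact ⟨k + m, by rw [zpow_add_apply]⟩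
  · rintro ⟨m, rfl⟩
    exact ⟨(f.toEquiv ^ (m - k)) x, ⟨m - k, rfl⟩, by rw [← zpow_add_apply, show k + (m - k) = m from by omega]⟩

end Aux


theorem stmt11 {X : Type*} [TopologicalSpace X] [CompactSpace X] [T2Space X] [Nonempty X] (f : X ≃ₜ X)
    (hf : DenselyAperiodic f)
    (B : Set X) (hB : IsBasicSet f B) :
    ∀ M : Set X, IsMinimalSet f M → interior B ∩ M = ∅ := by
  intro M hM
  obtain ⟨Mne, Mcl, Minv, Mmin⟩ := hM
  obtain ⟨⟨Bcl, Bqs⟩, Bss⟩ := hB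
  by_contra hne
  obtain ⟨x, hxB, hxM⟩ := Set.nonempty_iff_ne_empty.mpr hne
  -- M is invariant under all integer powers
  have hfwd : ∀ z ∈ M, f z ∈ M := fun z hz => Minv ▸ ⟨z, hz, rfl⟩
  have hbwd : ∀ z ∈ M, f.symm z ∈ M := by
    intro z hz
    rw [← Minv] at hz
    obtain ⟨w, hw, rfl⟩ := hz
    simpa using hw
  have invM : ∀ k : ℤ, ∀ z ∈ M, (f.toEquiv ^ k) z ∈ M := by
    intro k
    induction k using Int.induction_on with
    | zero => intro z hz; simpa using hz
    | succ i ih =>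
      intro z hz
      rw [zpow_add_one, Equiv.Perm.mul_apply]
      exact ih _ (hfwd z hz)
    | pred i ih =>
      intro z hz
      rw [zpow_sub_one, Equiv.Perm.mul_apply]
      have : (f.toEquiv)⁻¹ z = f.symm z := rfl
      rw [this]
      exact ih _ (hbwd z hz)
  have orbsubM : ∀ z ∈ M, orbitZ f z ⊆ M := by
    rintro z hz y ⟨k, rfl⟩
    exact invM k z hz
  -- the orbit of x meets B only at x
  have horbB : ∀ y ∈ orbitZ f x, y ∈ B → y = x := fun y hy hyB =>
    Bss x ⟨hy, hyB⟩ ⟨mem_orbitZ_self f x, interior_subset hxB⟩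
  -- M ∩ interior B = {x}
  have hMintB : ∀ z, z ∈ M → z ∈ interior B → z = x := by
    intro z hzM hzB
    by_contra hzx
    have hcl : z ∈ closure (orbitZ f x) := Mmin x hxM hzM
    obtain ⟨w, hwo, hworb⟩ := mem_closure_iff.mp hcl ({x}ᶜ ∩ interior B)
      (isClosed_singleton.isOpen_compl.inter isOpen_interior) ⟨hzx, hzB⟩
    exact hwo.1 (horbB w hworb (interior_subset hwo.2))
  by_cases hper : ∃ n : ℤ, n ≠ 0 ∧ (f.toEquiv ^ n) x = x
  · -- periodic case: find an aperiodic point whose orbit meets B twice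
    obtain ⟨n, hn0, hnx⟩ := hper
    obtain ⟨g, hg⟩ := exists_homeo_zpow f n
    have hWopen : IsOpen (interior B ∩ g '' interior B) :=
      isOpen_interior.inter (g.isOpenMap _ isOpen_interior)
    have hxW : x ∈ interior B ∩ g '' interior B :=
      ⟨hxB, ⟨x, hxB, by rw [hg]; exact hnx⟩⟩
    obtain ⟨y, hyap, hyW⟩ := hf.exists_mem_open hWopen ⟨x, hxW⟩
    have hyinf : (orbitZ f y).Infinite := hyap
    obtain ⟨y', hy', hgy'⟩ := hyW.2
    have hyn : (f.toEquiv ^ n) y' = y := by rw [← hg]; exact hgy'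
    have hy'orb : y' ∈ orbitZ f y := ⟨-n, by rw [← hyn, ← zpow_add_apply]; simp⟩
    have hne' : y' ≠ y := by
      intro h
      rw [h] at hyn
      exact aperiodic_of_infinite f hyinf n hn0 hyn
    exact hne' (Bss y ⟨hy'orb, interior_subset hy'⟩
      ⟨mem_orbitZ_self f y, interior_subset hyW.1⟩)
  · -- aperiodic case
    push_neg at hper
    have hapx : ∀ n : ℤ, n ≠ 0 → (f.toEquiv ^ n) x ≠ x := hper
    have hinf := orbit_infinite_of_aperiodic f hapx
    obtain ⟨z, hzM, hzacc⟩ := hinf.exists_accPt_of_subset_isCompact Mcl.isCompact (orbsubM x hxM)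
    have hxcl : x ∈ closure (orbitZ f z) := Mmin z hzM hxM
    obtain ⟨w, hwB, hworb⟩ := mem_closure_iff.mp hxcl (interior B) isOpen_interior hxB
    have hwx : w = x := hMintB w (orbsubM z hzM hworb) hwB
    have hxz : x ∈ orbitZ f z := hwx ▸ hworb
    obtain ⟨j, hj⟩ := hxz
    have hzc : z ∈ closure (orbitZ f x \ {z}) :=
      mem_closure_iff_clusterPt.mpr ((accPt_principal_iff_clusterPt (x := z)).mp hzacc)
    obtain ⟨g, hg⟩ := exists_homeo_zpow f j
    have hmem : g z ∈ g '' closure (orbitZ f x \ {z}) := Set.mem_image_of_mem g hzc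
    rw [g.image_closure] at hmem
    have hgz : g z = x := by rw [hg]; exact hj
    have himg : g '' (orbitZ f x \ {z}) = orbitZ f x \ {x} := by
      rw [Set.image_diff g.injective, Set.image_singleton, hgz]
      congr 1
      rw [show ⇑g = ⇑(f.toEquiv ^ j) from funext hg]
      exact orbitZ_image_zpow f x j
    rw [himg, hgz] at hmem
    obtain ⟨w', hw'B, hw'orb⟩ := mem_closure_iff.mp hmem (interior B) isOpen_interior hxB
    exact hw'orb.2 (horbB w' hw'orb.1 (interior_subset hw'B))
end

section
/- Let X be a nonempty compact subset of ℝ and f : X → X a homeomorphism. Define inf_f(x) := inf{ y : y ∈ O(x) } for each x ∈ X. If x belongs to the set inf_f := { inf_f(y) : y ∈ X }, then inf_f(x) = x. -/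
open Set

lemma cont_zpow' {Y : Type*} [TopologicalSpace Y] (f : Y ≃ₜ Y) (n : ℤ) :
    Continuous ⇑(f.toEquiv ^ n) := by
  induction n using Int.induction_on with
  | zero => simpa using continuous_id
  | succ k ih =>
      have h : ⇑(f.toEquiv ^ ((k:ℤ)+1)) = ⇑(f.toEquiv ^ (k:ℤ)) ∘ ⇑f := by
        ext z; simp [zpow_add_one, Equiv.Perm.mul_apply]
      rw [h]; exact ih.comp f.continuous
  | pred k ih =>
      have h : ⇑(f.toEquiv ^ (-(k:ℤ)-1)) = ⇑(f.toEquiv ^ (-(k:ℤ))) ∘ ⇑f.symm := by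
        ext z
        simp [zpow_sub_one, Equiv.Perm.mul_apply]
      rw [h]; exact ih.comp f.symm.continuous

lemma orbit_maps {Y : Type*} [TopologicalSpace Y] (f : Y ≃ₜ Y) (y : Y) (n : ℤ) :
    MapsTo ⇑(f.toEquiv ^ n) (orbitZ f y) (orbitZ f y) := by
  rintro z ⟨m, rfl⟩
  exact ⟨n + m, by rw [zpow_add, Equiv.Perm.mul_apply]⟩

theorem stmt15 (X : Set ℝ) (hne : X.Nonempty) (hX : IsCompact X)
    (f : X ≃ₜ X) (x : X)
    (hx : ∃ y : X, (x : ℝ) = sInf ((↑) '' orbitZ f y)) :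
    sInf ((↑) '' orbitZ f x) = (x : ℝ) := by
  obtain ⟨y, hxy⟩ := hx
  set S : Set ℝ := (↑) '' orbitZ f y with hS
  have hsub : S ⊆ X := Subtype.coe_image_subset X _
  have hbdd : BddBelow S := hX.bddBelow.mono hsub
  have hne' : S.Nonempty := ⟨(y : ℝ), y, ⟨0, by simp⟩, rfl⟩
  -- x is in the closure of S
  have hxcl : (x : ℝ) ∈ closure S := hxy ▸ csInf_mem_closure hne' hbdd
  -- transfer to closure inside the subtype
  have hclX : IsClosed X := hX.isClosed
  have hemb : Topology.IsClosedEmbedding ((↑) : X → ℝ) :=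
    Topology.IsClosedEmbedding.subtypeVal hclX
  have hclim : closure S = (↑) '' closure (orbitZ f y) := (hemb.closure_image_eq _)
  rw [hclim] at hxcl
  obtain ⟨x', hx', hxx'⟩ := hxcl
  have hxmem : x ∈ closure (orbitZ f y) := by
    rwa [show x = x' from Subtype.ext hxx'.symm]
  -- x is a lower bound of closure S hence of coe '' orbit x
  have hlb : ∀ z ∈ orbitZ f x, (x : ℝ) ≤ (z : ℝ) := by
    rintro z ⟨n, rfl⟩
    have hcl : (f.toEquiv ^ n) x ∈ closure (orbitZ f y) :=
      (orbit_maps f y n).closure (cont_zpow' f n) hxmem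
    have : ((f.toEquiv ^ n) x : ℝ) ∈ closure S := by
      rw [hclim]; exact ⟨_, hcl, rfl⟩
    have hxlbS : (x : ℝ) ∈ lowerBounds S := hxy ▸ fun a ha => csInf_le hbdd ha
    have : (x : ℝ) ∈ lowerBounds (closure S) := by
      rwa [lowerBounds_closure]
    exact this ‹((f.toEquiv ^ n) x : ℝ) ∈ closure S›
  have hneX : ((↑) '' orbitZ f x : Set ℝ).Nonempty := ⟨(x : ℝ), x, ⟨0, by simp⟩, rfl⟩
  have hbddX : BddBelow ((↑) '' orbitZ f x : Set ℝ) :=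
    hX.bddBelow.mono (Subtype.coe_image_subset X _)
  apply le_antisymm
  · exact csInf_le hbddX ⟨x, ⟨0, by simp⟩, rfl⟩
  · exact le_csInf hneX (by rintro a ⟨z, hz, rfl⟩; exact hlb z hz)
end
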